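/- For a decorated tree T with n edges, the word P(T) obtained by the charge construction is a Dyck path of size n. -/

import Mathlib

/-- A Dyck word: `true` is an up step `u`, `false` is a down step `d`. -/
def IsDyck (w : List Bool) : Prop :=
  w.count true = w.count false ∧ ∀ k, (w.take k).count false ≤ (w.take k).count true

/-- Position (0-based index) of the `i`-th (1-based) up step of `w`. -/
noncomputable def upPos (w : List Bool) (i : ℕ) : ℕ :=
  sInf {j | w.getD j false = true ∧ (w.take (j + 1)).count true = i}

/-- Position of the down step matching the up step at position `k`:
the first later down step such that the letters strictly in between form a Dyck word. -/
noncomputable def matchIdx (w : List Bool) (k : ℕ) : ℕ :=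
  sInf {m | k < m ∧ w.getD m true = false ∧ IsDyck ((w.drop (k + 1)).take (m - (k + 1)))}

/-- The distance function `D_w(i)`: number of letters between the `i`-th up step and its
matching down step, plus one. -/
noncomputable def distFn (w : List Bool) (i : ℕ) : ℕ :=
  matchIdx w (upPos w i) - upPos w i

/-- One rotation step of the Tamari order on Dyck words: a factor `d · B` (with `B` a
nonempty Dyck word) is replaced by `B · d`. -/
def TamariStep (P Q : List Bool) : Prop :=
  ∃ A B C : List Bool, IsDyck B ∧ B ≠ [] ∧
    P = A ++ false :: (B ++ C) ∧ Q = A ++ (B ++ false :: C)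

/-- The Tamari order on Dyck words: reflexive-transitive closure of rotation steps. -/
def TamariLe : List Bool → List Bool → Prop := Relation.ReflTransGen TamariStep
/-- The type of a Dyck word `w` of size `n`: the word of length `n - 1` over `{N, E}`
(encoded with `true = E`, `false = N`) whose `k`-th letter is `E` iff the letter following
the `k`-th up step of `w` is an up step. -/
noncomputable def typeWord (w : List Bool) : List Bool :=
  (List.range (w.count true - 1)).map (fun k => w.getD (upPos w (k + 1) + 1) false)

/-- A synchronized interval: a pair of Dyck words of the same size, comparable in the
Tamari order, and with the same type. -/
def Sync (P Q : List Bool) : Prop :=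
  IsDyck P ∧ IsDyck Q ∧ P.length = Q.length ∧ TamariLe P Q ∧ typeWord P = typeWord Q
/-- A rooted plane tree whose leaves carry integer labels. -/
inductive PTree : Type where
  | leaf : ℤ → PTree
  | node : List PTree → PTree

/-- The labels of the leaves of a tree, in (counterclockwise) traversal order. -/
def leavesOf : PTree → List ℤ
  | .leaf a => [a]
  | .node [] => []
  | .node (c :: cs) => leavesOf c ++ leavesOf (.node cs)

/-- The number of edges of a tree (internal and external), the root being a node. -/
def numEdges : PTree → ℕ
  | .leaf _ => 0
  | .node [] => 0
  | .node (c :: cs) => 1 + numEdges c + numEdges (.node cs)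

/-- The number of non-root internal nodes of a tree. -/
def internalCount : PTree → ℕ
  | .leaf _ => 0
  | .node [] => 0
  | .node (c :: cs) =>
      (match c with | .node _ => 1 | .leaf _ => 0) + internalCount c + internalCount (.node cs)

/-- The three conditions of decorated trees, for a subtree rooted at depth `d`:
(1) a leaf whose parent has depth `p` has label `≥ -1` and `< p`;
(2) every internal node of depth `d > 0` has a descendant leaf with label `≤ d - 2`;
(3) if a leaf of a subtree rooted at a child of a node of depth `d` has label `d`, then
all leaves of that subtree preceding it in traversal order have labels `≥ d`. -/
def Cond : PTree → ℕ → Prop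
  | .leaf a, d => -1 ≤ a ∧ a + 1 < (d : ℤ)
  | .node cs, d =>
      (0 < d → ∃ a ∈ leavesOf (.node cs), a ≤ (d : ℤ) - 2) ∧
      (∀ c ∈ cs, ∀ i j : ℕ, i < j → j < (leavesOf c).length →
        (leavesOf c).getD j 0 = (d : ℤ) → (d : ℤ) ≤ (leavesOf c).getD i 0) ∧
      (∀ c ∈ cs, Cond c (d + 1))

/-- A decorated tree: a rooted plane tree (rooted at an internal node) with integer
labels on leaves satisfying the three conditions. -/
def IsDecorated (T : PTree) : Prop :=
  (∃ cs, T = PTree.node cs) ∧ Cond T 0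

mutual
/-- The list of charges of the leaves of a subtree rooted at depth `d`, in traversal
order: every leaf starts with charge `0`, and each internal node of depth `d > 0` adds
one charge to its first descendant leaf with label `≤ d - 2`. -/
def chargeList : PTree → ℕ → List ℕ
  | .leaf _, _ => [0]
  | .node cs, d =>
      let base := chargeConcat cs (d + 1)
      if d = 0 then base
      else
        let i := (leavesOf (.node cs)).findIdx (fun a => decide (a ≤ (d : ℤ) - 2))
        base.set i (base.getD i 0 + 1)

/-- Charges of a forest of subtrees, all rooted at depth `d`. -/
def chargeConcat : List PTree → ℕ → List ℕ
  | [], _ => []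
  | c :: cs, d => chargeList c d ++ chargeConcat cs d
end

/-- Builds the lower path `P(T)` by traversal, consuming the list of leaf charges:
each edge contributes an up step `u = true` when first visited, and a leaf of charge `k`
contributes `u·d^(1+k)`. Returns the word and the unconsumed charges. -/
def buildP : PTree → List ℕ → List Bool × List ℕ
  | .leaf _, ks => (List.replicate (ks.headD 0 + 1) false, ks.tail)
  | .node [], ks => ([], ks)
  | .node (c :: cs), ks =>
      let r1 := buildP c ks
      let r2 := buildP (.node cs) r1.2
      (true :: (r1.1 ++ r2.1), r2.2)

/-- The lower Dyck path `P(T)` of a decorated tree, via the charge construction. -/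
def Pword (T : PTree) : List Bool := (buildP T (chargeList T 0)).1

/-- The upper Dyck path `Q(T)`: the depth evolution of the traversal of `T`
(`true` = down an edge, `false` = up an edge). -/
def Qword : PTree → List Bool
  | .leaf _ => []
  | .node [] => []
  | .node (c :: cs) => (true :: (Qword c ++ [false])) ++ Qword (.node cs)


/-! ### Auxiliary lemmas for `Pword_isDyck` -/

section PwordAux

open List

lemma PTree.one_le_sizeOf (c : PTree) : 1 ≤ sizeOf c := by
  cases c <;> simp

lemma chargeList_leaf (a : ℤ) (d : ℕ) : chargeList (.leaf a) d = [0] := by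
  rw [chargeList]

lemma chargeList_node_zero (cs : List PTree) : chargeList (.node cs) 0 = chargeConcat cs 1 := by
  rw [chargeList]; simp

lemma chargeList_node_pos (cs : List PTree) (d : ℕ) (h : d ≠ 0) :
    chargeList (.node cs) d =
      (chargeConcat cs (d+1)).set
        ((leavesOf (.node cs)).findIdx (fun a => decide (a ≤ (d : ℤ) - 2)))
        ((chargeConcat cs (d+1)).getD
          ((leavesOf (.node cs)).findIdx (fun a => decide (a ≤ (d : ℤ) - 2))) 0 + 1) := by
  rw [chargeList]; simp [h]

lemma chargeConcat_nil (d : ℕ) : chargeConcat [] d = [] := by rw [chargeConcat]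

lemma chargeConcat_cons (c : PTree) (cs : List PTree) (d : ℕ) :
    chargeConcat (c :: cs) d = chargeList c d ++ chargeConcat cs d := by rw [chargeConcat]

lemma leavesOf_cons (c : PTree) (cs : List PTree) :
    leavesOf (.node (c :: cs)) = leavesOf c ++ leavesOf (.node cs) := by rw [leavesOf]

lemma numEdges_cons (c : PTree) (cs : List PTree) :
    numEdges (.node (c :: cs)) = 1 + numEdges c + numEdges (.node cs) := by rw [numEdges]

lemma internalCount_cons_leaf (a : ℤ) (cs : List PTree) :
    internalCount (.node (.leaf a :: cs)) = internalCount (.node cs) := by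
  rw [internalCount.eq_def]; simp [internalCount]

lemma internalCount_cons_node (cs_c cs : List PTree) :
    internalCount (.node (.node cs_c :: cs)) =
      1 + internalCount (.node cs_c) + internalCount (.node cs) := by
  rw [internalCount.eq_def]

lemma Cond_node (cs : List PTree) (d : ℕ) :
    Cond (.node cs) d ↔
      (0 < d → ∃ a ∈ leavesOf (.node cs), a ≤ (d : ℤ) - 2) ∧
      (∀ c ∈ cs, ∀ i j : ℕ, i < j → j < (leavesOf c).length →
        (leavesOf c).getD j 0 = (d : ℤ) → (d : ℤ) ≤ (leavesOf c).getD i 0) ∧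
      (∀ c ∈ cs, Cond c (d + 1)) := by rw [Cond]

lemma buildP_leaf (a : ℤ) (ks : List ℕ) :
    buildP (.leaf a) ks = (List.replicate (ks.headD 0 + 1) false, ks.tail) := by rw [buildP]

lemma buildP_nil (ks : List ℕ) : buildP (.node []) ks = ([], ks) := by rw [buildP]

lemma buildP_cons (c : PTree) (cs : List PTree) (ks : List ℕ) :
    buildP (.node (c :: cs)) ks =
      (true :: ((buildP c ks).1 ++ (buildP (.node cs) (buildP c ks).2).1),
        (buildP (.node cs) (buildP c ks).2).2) := by
  rw [buildP]

/-- Sum of a list after incrementing one in-range entry. -/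
lemma sum_set_getD_succ : ∀ (l : List ℕ) (i : ℕ), i < l.length →
    (l.set i (l.getD i 0 + 1)).sum = l.sum + 1 := by
  intro l
  induction l with
  | nil => intro i h; simp at h
  | cons x xs ih =>
    intro i h
    cases i with
    | zero => simp [List.sum_cons]; omega
    | succ j =>
      simp only [List.length_cons, Nat.succ_lt_succ_iff] at h
      simp only [List.set_cons_succ, List.getD_cons_succ, List.sum_cons, ih j h]
      omega

lemma forall2_sum_le : ∀ {a b : List ℕ}, List.Forall₂ (· ≤ ·) a b → a.sum ≤ b.sum := by
  intro a b h
  induction h with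
  | nil => simp
  | cons h _ ih => simp only [List.sum_cons]; omega

lemma forall2_le_set : ∀ (l : List ℕ) (i : ℕ) (ks : List ℕ),
    List.Forall₂ (· ≤ ·) (l.set i (l.getD i 0 + 1)) ks → List.Forall₂ (· ≤ ·) l ks := by
  intro l
  induction l with
  | nil => intro i ks h; simpa using h
  | cons x xs ih =>
    intro i ks h
    cases i with
    | zero =>
      simp only [List.set_cons_zero, List.getD_cons_zero] at h
      cases h with
      | cons h1 h2 => exact List.Forall₂.cons (by omega) h2
    | succ j =>
      simp only [List.set_cons_succ, List.getD_cons_succ] at h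
      cases h with
      | cons h1 h2 => exact List.Forall₂.cons h1 (ih j _ h2)

lemma one_le_sizeOf_list (cs : List PTree) : 1 ≤ sizeOf cs := by
  cases cs with
  | nil => simp
  | cons a l => simp; omega

/-- Length of charge lists. -/
lemma chargeLen : ∀ n : ℕ,
    (∀ T : PTree, sizeOf T ≤ n → ∀ d, (chargeList T d).length = (leavesOf T).length) ∧
    (∀ cs : List PTree, sizeOf cs ≤ n → ∀ d,
      (chargeConcat cs d).length = (leavesOf (.node cs)).length) := by
  intro n
  induction n with
  | zero =>
    constructor
    · intro T h; have := PTree.one_le_sizeOf T; omega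
    · intro cs h; have := one_le_sizeOf_list cs; omega
  | succ n ih =>
    constructor
    · intro T h d
      match T with
      | .leaf a => simp [chargeList_leaf, leavesOf]
      | .node cs =>
        have hcs : sizeOf cs ≤ n := by simp at h; omega
        rcases Nat.eq_zero_or_pos d with hd | hd
        · subst hd; rw [chargeList_node_zero]; exact ih.2 cs hcs 1
        · rw [chargeList_node_pos cs d (by omega)]
          rw [List.length_set]; exact ih.2 cs hcs (d+1)
    · intro cs h d
      match cs with
      | [] => simp [chargeConcat_nil, leavesOf]
      | c :: cs' =>
        have h1 : sizeOf c ≤ n ∧ sizeOf cs' ≤ n := by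
          have := PTree.one_le_sizeOf c
          have := one_le_sizeOf_list cs'
          simp at h; omega
        rw [chargeConcat_cons, List.length_append, leavesOf_cons, List.length_append,
          ih.1 c h1.1 d, ih.2 cs' h1.2 d]

lemma chargeList_length (T : PTree) (d : ℕ) :
    (chargeList T d).length = (leavesOf T).length :=
  (chargeLen (sizeOf T)).1 T le_rfl d

lemma chargeConcat_length (cs : List PTree) (d : ℕ) :
    (chargeConcat cs d).length = (leavesOf (.node cs)).length :=
  (chargeLen (sizeOf cs)).2 cs le_rfl d

/-- The unconsumed charges after building. -/
lemma buildP_snd : ∀ n : ℕ, ∀ T : PTree, sizeOf T ≤ n → ∀ ks : List ℕ,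
    (buildP T ks).2 = ks.drop (leavesOf T).length := by
  intro n
  induction n with
  | zero => intro T h; have := PTree.one_le_sizeOf T; omega
  | succ n ih =>
    intro T h ks
    match T with
    | .leaf a => simp [buildP_leaf, leavesOf, List.drop_one]
    | .node [] => simp [buildP_nil, leavesOf]
    | .node (c :: cs) =>
      have h1 : sizeOf c ≤ n ∧ sizeOf (PTree.node cs) ≤ n := by
        have := PTree.one_le_sizeOf c
        have := one_le_sizeOf_list cs
        simp at h ⊢; omega
      rw [buildP_cons]
      simp only
      rw [ih c h1.1 ks, ih (.node cs) h1.2, List.drop_drop, leavesOf_cons,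
        List.length_append, Nat.add_comm]

lemma buildP_drop (T : PTree) (ks : List ℕ) :
    (buildP T ks).2 = ks.drop (leavesOf T).length :=
  buildP_snd (sizeOf T) T le_rfl ks

/-- The built word only depends on the consumed charges. -/
lemma buildP_fst_app : ∀ n : ℕ, ∀ T : PTree, sizeOf T ≤ n → ∀ k1 k2 : List ℕ,
    (leavesOf T).length ≤ k1.length → (buildP T (k1 ++ k2)).1 = (buildP T k1).1 := by
  intro n
  induction n with
  | zero => intro T h; have := PTree.one_le_sizeOf T; omega
  | succ n ih =>
    intro T h k1 k2 hlen
    match T with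
    | .leaf a =>
      simp only [leavesOf, List.length_singleton] at hlen
      match k1 with
      | [] => simp at hlen
      | x :: k1' => simp [buildP_leaf]
    | .node [] => simp [buildP_nil]
    | .node (c :: cs) =>
      have h1 : sizeOf c ≤ n ∧ sizeOf (PTree.node cs) ≤ n := by
        have := PTree.one_le_sizeOf c
        have := one_le_sizeOf_list cs
        simp at h ⊢; omega
      have hlen' : (leavesOf c).length + (leavesOf (.node cs)).length ≤ k1.length := by
        simpa [leavesOf_cons] using hlen
      set m := (leavesOf c).length with hm
      have hk1 : k1 = k1.take m ++ k1.drop m := (List.take_append_drop m k1).symm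
      have htk : (k1.take m).length = m := by
        rw [List.length_take]; omega
      rw [buildP_cons, buildP_cons]
      simp only
      have e1 : (buildP c (k1 ++ k2)).1 = (buildP c k1).1 := by
        conv_lhs => rw [hk1, List.append_assoc]
        rw [ih c h1.1 (k1.take m) (k1.drop m ++ k2) (by omega)]
        conv_rhs => rw [hk1]
        rw [ih c h1.1 (k1.take m) (k1.drop m) (by omega)]
      have e2 : (buildP (.node cs) (buildP c (k1 ++ k2)).2).1
          = (buildP (.node cs) (buildP c k1).2).1 := by
        rw [buildP_drop, buildP_drop, ← hm]
        have : (k1 ++ k2).drop m = k1.drop m ++ k2 :=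
          List.drop_append_of_le_length (by omega)
        rw [this]
        exact ih (.node cs) h1.2 (k1.drop m) k2 (by rw [List.length_drop]; omega)
      rw [e1, e2]

/-- Number of up steps of the built word. -/
lemma buildP_count_true : ∀ n : ℕ, ∀ T : PTree, sizeOf T ≤ n → ∀ ks : List ℕ,
    ((buildP T ks).1).count true = numEdges T := by
  intro n
  induction n with
  | zero => intro T h; have := PTree.one_le_sizeOf T; omega
  | succ n ih =>
    intro T h ks
    match T with
    | .leaf a => simp [buildP_leaf, numEdges, List.count_replicate]
    | .node [] => simp [buildP_nil, numEdges]
    | .node (c :: cs) =>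
      have h1 : sizeOf c ≤ n ∧ sizeOf (PTree.node cs) ≤ n := by
        have := PTree.one_le_sizeOf c
        have := one_le_sizeOf_list cs
        simp at h ⊢; omega
      rw [buildP_cons, numEdges_cons]
      simp only [List.count_cons, List.count_append, ih c h1.1, ih (.node cs) h1.2]
      simp [Nat.add_comm, Nat.add_assoc, Nat.add_left_comm]

/-- Number of down steps of the built word. -/
lemma buildP_count_false : ∀ n : ℕ, ∀ T : PTree, sizeOf T ≤ n → ∀ ks : List ℕ,
    ((buildP T ks).1).count false
      = (leavesOf T).length + (ks.take (leavesOf T).length).sum := by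
  intro n
  induction n with
  | zero => intro T h; have := PTree.one_le_sizeOf T; omega
  | succ n ih =>
    intro T h ks
    match T with
    | .leaf a =>
      have : (ks.take 1).sum = ks.headD 0 := by
        match ks with
        | [] => simp
        | x :: ks' => simp
      simp [buildP_leaf, leavesOf, this, Nat.add_comm]
    | .node [] => simp [buildP_nil, leavesOf]
    | .node (c :: cs) =>
      have h1 : sizeOf c ≤ n ∧ sizeOf (PTree.node cs) ≤ n := by
        have := PTree.one_le_sizeOf c
        have := one_le_sizeOf_list cs
        simp at h ⊢; omega
      set m := (leavesOf c).length
      set m' := (leavesOf (.node cs)).length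
      rw [buildP_cons]
      simp only [List.count_cons, List.count_append, cond_false,
        ih c h1.1, ih (.node cs) h1.2, buildP_drop]
      rw [leavesOf_cons, List.length_append, List.take_add, List.sum_append]
      simp; omega

/-- Sum of charges equals number of internal nodes (root included, non-root at that). -/
lemma chargeSum : ∀ n : ℕ, ∀ cs : List PTree, sizeOf cs ≤ n → ∀ d : ℕ, 1 ≤ d →
    (∀ c ∈ cs, Cond c d) → (chargeConcat cs d).sum = internalCount (.node cs) := by
  intro n
  induction n with
  | zero => intro cs h; have := one_le_sizeOf_list cs; omega
  | succ n ih =>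
    intro cs h d hd hcond
    match cs with
    | [] => simp [chargeConcat_nil, internalCount]
    | c :: cs' =>
      have h1 : sizeOf c ≤ n ∧ sizeOf cs' ≤ n := by
        have := PTree.one_le_sizeOf c
        have := one_le_sizeOf_list cs'
        simp at h; omega
      rw [chargeConcat_cons, List.sum_append,
        ih cs' h1.2 d hd (fun c hc => hcond c (List.mem_cons_of_mem _ hc))]
      have hcc := hcond c List.mem_cons_self
      match c with
      | .leaf a =>
        rw [chargeList_leaf, internalCount_cons_leaf]
        simp [internalCount]
      | .node cs_c =>
        have hcsc : sizeOf cs_c ≤ n := by simp at h1; omega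
        rw [Cond_node] at hcc
        obtain ⟨hex, -, hsub⟩ := hcc
        obtain ⟨a, ha, hale⟩ := hex (by omega)
        have hidx : (leavesOf (.node cs_c)).findIdx (fun a => decide (a ≤ (d : ℤ) - 2))
            < (leavesOf (.node cs_c)).length :=
          List.findIdx_lt_length_of_exists ⟨a, ha, by simpa using hale⟩
        rw [chargeList_node_pos cs_c d (by omega),
          sum_set_getD_succ _ _ (by rw [chargeConcat_length]; exact hidx),
          ih cs_c hcsc (d+1) (by omega) hsub]
        rw [internalCount_cons_node]
        omega

/-- Edges = leaves + non-root internal nodes. -/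
lemma edges_eq : ∀ n : ℕ, ∀ cs : List PTree, sizeOf cs ≤ n →
    numEdges (.node cs) = (leavesOf (.node cs)).length + internalCount (.node cs) := by
  intro n
  induction n with
  | zero => intro cs h; have := one_le_sizeOf_list cs; omega
  | succ n ih =>
    intro cs h
    match cs with
    | [] => simp [numEdges, leavesOf, internalCount]
    | c :: cs' =>
      have h1 : sizeOf c ≤ n ∧ sizeOf cs' ≤ n := by
        have := PTree.one_le_sizeOf c
        have := one_le_sizeOf_list cs'
        simp at h; omega
      have hrec := ih cs' h1.2
      rw [numEdges_cons, leavesOf_cons, List.length_append, hrec]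
      match c with
      | .leaf a =>
        rw [internalCount_cons_leaf]
        simp [numEdges, leavesOf, internalCount]; omega
      | .node cs_c =>
        have hcsc : sizeOf cs_c ≤ n := by simp at h1; omega
        rw [internalCount_cons_node, ih cs_c hcsc]
        omega

/-- The key prefix inequality: in any prefix, the number of down steps plus the total
charge budget is at most the number of up steps plus the supplied charges. -/
lemma P_main : ∀ n : ℕ, ∀ cs : List PTree, sizeOf cs ≤ n → ∀ d : ℕ, 1 ≤ d →
    (∀ c ∈ cs, Cond c d) → ∀ ks : List ℕ,
    List.Forall₂ (· ≤ ·) (chargeConcat cs d) ks → ∀ j : ℕ,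
    (((buildP (.node cs) ks).1.take j).count false) + (chargeConcat cs d).sum
      ≤ (((buildP (.node cs) ks).1.take j).count true) + ks.sum := by
  intro n
  induction n with
  | zero => intro cs h; have := one_le_sizeOf_list cs; omega
  | succ n ih =>
    intro cs h d hd hcond ks hf j
    match cs with
    | [] =>
      rw [chargeConcat_nil] at hf ⊢
      have hks : ks = [] := List.forall₂_nil_left_iff.mp hf
      subst hks
      simp [buildP_nil]
    | c :: cs' =>
      have h1 : sizeOf c ≤ n ∧ sizeOf cs' ≤ n := by
        have := PTree.one_le_sizeOf c
        have := one_le_sizeOf_list cs'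
        simp at h; omega
      rw [chargeConcat_cons] at hf ⊢
      have hf1 : List.Forall₂ (· ≤ ·) (chargeList c d) (ks.take (chargeList c d).length) := by
        have := List.forall₂_take (chargeList c d).length hf
        rwa [List.take_left] at this
      have hf2 : List.Forall₂ (· ≤ ·) (chargeConcat cs' d) (ks.drop (chargeList c d).length) := by
        have := List.forall₂_drop (chargeList c d).length hf
        rwa [List.drop_left] at this
      obtain ⟨k1, k2, hks, hg1, hg2, hk1len⟩ :
          ∃ k1 k2 : List ℕ, ks = k1 ++ k2 ∧
            List.Forall₂ (· ≤ ·) (chargeList c d) k1 ∧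
            List.Forall₂ (· ≤ ·) (chargeConcat cs' d) k2 ∧
            k1.length = (chargeList c d).length :=
        ⟨_, _, (List.take_append_drop _ ks).symm, hf1, hf2, hf1.length_eq.symm⟩
      clear hf1 hf2
      have hn1 : (chargeList c d).length = (leavesOf c).length := chargeList_length c d
      have hfst1 : (buildP c ks).1 = (buildP c k1).1 := by
        conv_lhs => rw [hks]
        exact buildP_fst_app (sizeOf c) c le_rfl k1 k2 (by omega)
      have hsnd1 : (buildP c ks).2 = k2 := by
        rw [buildP_drop, ← hn1, ← hk1len, hks, List.drop_left]
      have hw : (buildP (.node (c :: cs')) ks).1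
          = true :: ((buildP c k1).1 ++ (buildP (.node cs') k2).1) := by
        rw [buildP_cons]
        simp only
        rw [hfst1, hsnd1]
      have hsum2 : ks.sum = k1.sum + k2.sum := by
        conv_lhs => rw [hks]
        rw [List.sum_append]
      -- the head block bound
      have headb : ∀ m : ℕ, (((buildP c k1).1.take m).count false) + (chargeList c d).sum
          ≤ 1 + (((buildP c k1).1.take m).count true) + k1.sum := by
        intro m
        match c with
        | .leaf aa =>
          rw [chargeList_leaf] at hg1 ⊢
          obtain ⟨k, k1', hk, hk1', rfl⟩ := List.forall₂_cons_left_iff.mp hg1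
          have : k1' = [] := List.forall₂_nil_left_iff.mp hk1'
          subst this
          rw [buildP_leaf]
          simp only [List.headD_cons, List.take_replicate, List.count_replicate]
          simp
        | .node cs_c =>
          have hcsc : sizeOf cs_c ≤ n := by simp at h1; omega
          have hcc := hcond _ List.mem_cons_self
          rw [Cond_node] at hcc
          obtain ⟨hex, -, hsub⟩ := hcc
          obtain ⟨aa, ha, hale⟩ := hex (by omega)
          have hidx : (leavesOf (.node cs_c)).findIdx (fun a => decide (a ≤ (d : ℤ) - 2))
              < (leavesOf (.node cs_c)).length :=
            List.findIdx_lt_length_of_exists ⟨aa, ha, by simpa using hale⟩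
          have hcl := chargeList_node_pos cs_c d (by omega)
          have hfbase : List.Forall₂ (· ≤ ·) (chargeConcat cs_c (d+1)) k1 := by
            apply forall2_le_set _ _ _ (hcl ▸ hg1)
          have hsumset : (chargeList (.node cs_c) d).sum
              = (chargeConcat cs_c (d+1)).sum + 1 := by
            rw [hcl]
            exact sum_set_getD_succ _ _ (by rw [chargeConcat_length]; exact hidx)
          have := ih cs_c hcsc (d+1) (by omega) hsub k1 hfbase m
          rw [hsumset]
          omega
      match j with
      | 0 =>
        simp only [List.take_zero, List.count_nil, Nat.zero_add, List.sum_append]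
        have := forall2_sum_le hg1
        have := forall2_sum_le hg2
        omega
      | j' + 1 =>
        have restb := ih cs' h1.2 d hd
          (fun c' hc' => hcond c' (List.mem_cons_of_mem _ hc')) k2 hg2
          (j' - (buildP c k1).1.length)
        rw [hw, List.take_succ_cons, List.take_append]
        simp only [List.count_cons, List.count_append, List.sum_append]
        have hb := headb j'
        simp only [show (false == true) = false from rfl,
          show (true == false) = false from rfl,
          show (true == true) = true from rfl, if_true, if_false,
          show (if false = true then (1:ℕ) else 0) = 0 from rfl]
        omega

end PwordAux

/-- For a decorated tree `T` with `n` edges, `P(T)` is a Dyck path of size `n`. -/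
theorem Pword_isDyck (T : PTree) (h : IsDecorated T) :
    IsDyck (Pword T) ∧ (Pword T).count true = numEdges T := by
  obtain ⟨⟨cs, rfl⟩, hcond⟩ := h
  rw [Cond_node] at hcond
  obtain ⟨-, -, hsub⟩ := hcond
  have hPw : Pword (.node cs) = (buildP (.node cs) (chargeConcat cs 1)).1 := by
    rw [Pword, chargeList_node_zero]
  have hct : (Pword (.node cs)).count true = numEdges (.node cs) := by
    rw [hPw]; exact buildP_count_true _ _ le_rfl _
  have htk : (chargeConcat cs 1).take (leavesOf (.node cs)).length = chargeConcat cs 1 := by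
    rw [← chargeConcat_length cs 1, List.take_length]
  have hcf : (Pword (.node cs)).count false = numEdges (.node cs) := by
    rw [hPw, buildP_count_false _ _ le_rfl, htk,
      chargeSum (sizeOf cs) cs le_rfl 1 le_rfl hsub, edges_eq (sizeOf cs) cs le_rfl]
  refine ⟨⟨by rw [hct, hcf], fun k => ?_⟩, hct⟩
  have := P_main (sizeOf cs) cs le_rfl 1 le_rfl hsub (chargeConcat cs 1)
    (List.forall₂_same.mpr (fun x _ => le_refl x)) k
  rw [← hPw] at this
  omega
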